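/- Let u : ℝ → ℤ → ℝ be differentiable in t and satisfy u̇ₙ = uₙ₊₁uₙ²uₙ₋₁(uₙ₊₂ − uₙ₋₂). Define v t n = u t (n+1) · u t (n−1). Then v satisfies v̇ₙ = vₙ[vₙ₊₁(vₙ₊₂ − vₙ) + vₙ₋₁(vₙ − vₙ₋₂)]. -/

import Mathlib

/-- Transformation T4 (v̂ₙ = uₙ₊₁uₙ₋₁) maps equation (E2) to equation (E1). -/
theorem stmt_2 (u v : ℝ → ℤ → ℝ)
    (hu : ∀ t n, HasDerivAt (fun s => u s n)
      (u t (n + 1) * (u t n) ^ 2 * u t (n - 1) * (u t (n + 2) - u t (n - 2))) t)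
    (hv : ∀ t n, v t n = u t (n + 1) * u t (n - 1)) :
    ∀ t n, HasDerivAt (fun s => v s n)
      (v t n * (v t (n + 1) * (v t (n + 2) - v t n) + v t (n - 1) * (v t n - v t (n - 2)))) t := by
  intro t n
  have h : HasDerivAt (fun s => u s (n + 1) * u s (n - 1)) _ t :=
    (hu t (n + 1)).mul (hu t (n - 1))
  have hfun : (fun s => v s n) = fun s => u s (n + 1) * u s (n - 1) :=
    funext fun s => hv s n
  rw [hfun]
  convert h using 1
  simp only [hv, show (n : ℤ) + 1 + 1 = n + 2 by ring, show (n : ℤ) + 1 - 1 = n by ring,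
    show (n : ℤ) - 1 + 1 = n by ring, show (n : ℤ) - 1 - 1 = n - 2 by ring,
    show (n : ℤ) + 1 + 2 = n + 3 by ring, show (n : ℤ) + 1 - 2 = n - 1 by ring,
    show (n : ℤ) - 1 + 2 = n + 1 by ring, show (n : ℤ) - 1 - 2 = n - 3 by ring]
  ring
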